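/- The reduced graph of the zero-divisor graph of S = P({1,2,3}) × Z/4Z is not isomorphic to the zero-divisor graph G(P(n)) of the power-set semigroup (P([n]), ∩) for any natural number n. -/

import Mathlib

/-- The semigroup carrier: power set of a 3-element set times `ZMod 4`. -/
abbrev S : Type := Finset (Fin 3) × ZMod 4

/-- The componentwise operation `(X,a)*(Y,b) = (X ∩ Y, a*b)`. -/
def mulS (s t : S) : S := (s.1 ∩ t.1, s.2 * t.2)

/-- The zero element `(∅, 0)`. -/
def zeroS : S := (∅, 0)

/-- `s` is a nonzero zero-divisor of `S`. -/
def IsVertex (s : S) : Prop := s ≠ zeroS ∧ ∃ t : S, t ≠ zeroS ∧ mulS s t = zeroS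

/-- The zero-divisor graph `G(S)`. -/
def G : SimpleGraph S where
  Adj s t := s ≠ t ∧ IsVertex s ∧ IsVertex t ∧ mulS s t = zeroS
  symm := by
    constructor
    rintro s t ⟨h1, h2, h3, h4⟩
    refine ⟨h1.symm, h3, h2, ?_⟩
    simpa [mulS, Finset.inter_comm, mul_comm] using h4
  loopless := by constructor; rintro s ⟨h, _⟩; exact h rfl

/-- `u ⟂ v`: adjacent with no common neighbor. -/
def Orth (u v : S) : Prop := G.Adj u v ∧ ∀ w : S, ¬ (G.Adj w u ∧ G.Adj w v)

/-- The setoid on the vertices of `G(S)` given by equality of neighborhoods. -/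
def nsetoid : Setoid {s : S // IsVertex s} :=
  ⟨fun u v => G.neighborSet u.1 = G.neighborSet v.1,
   ⟨fun _ => rfl, Eq.symm, Eq.trans⟩⟩

/-- The reduced graph `G_r(S)`. -/
def Gr : SimpleGraph (Quotient nsetoid) where
  Adj x y := x ≠ y ∧ ∃ u v : {s : S // IsVertex s},
    Quotient.mk nsetoid u = x ∧ Quotient.mk nsetoid v = y ∧ G.Adj u.1 v.1
  symm := by
    constructor
    rintro x y ⟨h1, u, v, hu, hv, huv⟩
    exact ⟨h1.symm, v, u, hv, hu, huv.symm⟩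
  loopless := by constructor; rintro x ⟨h, _⟩; exact h rfl

/-- Vertices of the zero-divisor graph of the power-set semigroup `(P([n]), ∩)`:
the nonzero zero-divisors. -/
def PVtx (n : ℕ) : Type :=
  {X : Finset (Fin n) // X ≠ ∅ ∧ ∃ Y : Finset (Fin n), Y ≠ ∅ ∧ X ∩ Y = ∅}

/-- The zero-divisor graph `G(P(n))` of `(P([n]), ∩)`. -/
def GP (n : ℕ) : SimpleGraph (PVtx n) where
  Adj X Y := X ≠ Y ∧ X.1 ∩ Y.1 = ∅
  symm := by
    constructor
    rintro X Y ⟨h1, h2⟩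
    exact ⟨h1.symm, by simpa [Finset.inter_comm] using h2⟩
  loopless := by constructor; rintro X ⟨h, _⟩; exact h rfl


instance : DecidablePred IsVertex := fun s => by unfold IsVertex; infer_instance

instance decAdj : DecidableRel G.Adj := fun s t => by
  change Decidable (s ≠ t ∧ IsVertex s ∧ IsVertex t ∧ mulS s t = zeroS)
  infer_instance

instance decR : DecidableRel nsetoid.r := fun u v =>
  decidable_of_iff (∀ w, G.Adj u.1 w ↔ G.Adj v.1 w) (by
    change _ ↔ G.neighborSet u.1 = G.neighborSet v.1
    simp [Set.ext_iff, SimpleGraph.mem_neighborSet])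

instance : DecidableEq (Quotient nsetoid) := fun x y =>
  Quotient.recOnSubsingleton₂ x y fun u v =>
    decidable_of_iff (nsetoid.r u v) (Quotient.eq'').symm

instance : Fintype (Quotient nsetoid) :=
  Fintype.ofSurjective (Quotient.mk nsetoid)
    (fun x => Quotient.inductionOn x fun u => ⟨u, rfl⟩)

set_option maxRecDepth 10000 in
lemma cardGr : Fintype.card (Quotient nsetoid) = 22 := by decide

instance (n : ℕ) : Fintype (PVtx n) := by unfold PVtx; infer_instance

lemma cardPVtx (n : ℕ) (hn : 1 ≤ n) : Fintype.card (PVtx n) + 2 = 2 ^ n := by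
  have he : Fintype.card (PVtx n) =
      Fintype.card {X : Finset (Fin n) // X ≠ ∅ ∧ X ≠ Finset.univ} := by
    apply Fintype.card_congr
    apply Equiv.subtypeEquivRight
    intro X
    constructor
    · rintro ⟨h1, Y, hY, hXY⟩
      refine ⟨h1, ?_⟩
      rintro rfl
      simp [Finset.univ_inter] at hXY
      exact hY hXY
    · rintro ⟨h1, h2⟩
      refine ⟨h1, Xᶜ, ?_, by simp⟩
      simpa [Finset.compl_eq_empty_iff] using h2
  rw [he, Fintype.card_subtype]
  have hneg : (Finset.univ.filter
      fun X : Finset (Fin n) => ¬(X ≠ ∅ ∧ X ≠ Finset.univ)) = {∅, Finset.univ} := by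
    ext X
    simp [not_and_or, or_comm (a := X = ∅)]
    tauto
  have key := Finset.card_filter_add_card_filter_not
    (s := (Finset.univ : Finset (Finset (Fin n))))
    (p := fun X : Finset (Fin n) => X ≠ ∅ ∧ X ≠ Finset.univ)
  rw [hneg] at key
  have hne : (∅ : Finset (Fin n)) ≠ Finset.univ := by
    intro h
    have : (0:ℕ) < n := hn
    obtain ⟨i⟩ := Fin.pos_iff_nonempty.mp this
    have := Finset.mem_univ i
    rw [← h] at this
    simp at this
  rw [Finset.card_insert_of_notMem (by simpa using hne), Finset.card_singleton] at key
  simpa [Finset.card_univ, Fintype.card_finset] using key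

theorem stmt17 : ∀ n : ℕ, ¬ Nonempty (Gr ≃g GP n) := by
  rintro n ⟨e⟩
  have hcard : Fintype.card (Quotient nsetoid) = Fintype.card (PVtx n) :=
    Fintype.card_congr e.toEquiv
  rw [cardGr] at hcard
  rcases Nat.eq_zero_or_pos n with rfl | hn
  · have : IsEmpty (PVtx 0) := ⟨by rintro ⟨X, h1, -⟩; exact h1 (Finset.eq_empty_of_forall_notMem (by simp [Fin.isEmpty.false]))⟩
    rw [Fintype.card_eq_zero] at hcard
    exact absurd hcard (by norm_num)
  · have h := cardPVtx n hn
    rw [← hcard] at h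
    have h24 : 2 ^ n = 24 := by omega
    have hlt : n < 5 := by
      by_contra hge
      have : 2 ^ 5 ≤ 2 ^ n := Nat.pow_le_pow_right (by norm_num) (by omega)
      omega
    interval_cases n <;> omega
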